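/- For every a > 1 and every h with 0 < h < (a² - 1)/2, the quantity √h·(a²-22a+4h+1)/(√2·(a²-2a+2h+1)) - √h·(a²+2a+4h+1)/(√2·(a²+2a+2h+1)) - π(a+1) + (11-a)·arctan(√(2h)/(a-1)) + (a+1)·arctan(√(2h)/(a+1)) is strictly negative. (This quantity equals the partial derivative with respect to a of M′(h; a, -(5/4)(a+1)²), the h-derivative of the Melnikov function evaluated along b = -(5/4)(a+1)².) -/

import Mathlib

open Real

private lemma my_arctan_nonneg {x : ℝ} (hx : 0 ≤ x) : 0 ≤ Real.arctan x := by
  rw [← Real.arctan_zero]; exact Real.arctan_strictMono.monotone hx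

private lemma my_arctan_le_self {x : ℝ} (hx : 0 ≤ x) : Real.arctan x ≤ x := by
  rcases lt_or_eq_of_le hx with h | h
  · have h1 : 0 < Real.arctan x := by
      rw [← Real.arctan_zero]; exact Real.arctan_strictMono h
    have h2 := Real.lt_tan h1 (Real.arctan_lt_pi_div_two x)
    rw [Real.tan_arctan] at h2; linarith
  · rw [← h]; simp

private lemma my_arctan_lb {x : ℝ} (hx : 0 ≤ x) : x / (1 + x^2) ≤ Real.arctan x := by
  have h0 : 0 ≤ Real.arctan x := my_arctan_nonneg hx
  have hsin := Real.sin_arctan x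
  have hcos := Real.cos_arctan x
  have hs1 : Real.sin (Real.arctan x) ≤ Real.arctan x := Real.sin_le h0
  have hsq : Real.sqrt (1+x^2) * Real.sqrt (1+x^2) = 1 + x^2 :=
    Real.mul_self_sqrt (by positivity)
  have hsp : 0 < Real.sqrt (1+x^2) := Real.sqrt_pos.2 (by positivity)
  have key : x/(1+x^2) = Real.sin (Real.arctan x) * Real.cos (Real.arctan x) := by
    rw [hsin, hcos]; field_simp; rw [Real.sq_sqrt (by positivity)]
  have hsin0 : 0 ≤ Real.sin (Real.arctan x) := by rw [hsin]; positivity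
  have hcos1 : Real.cos (Real.arctan x) ≤ 1 := Real.cos_le_one _
  calc x/(1+x^2) = Real.sin (Real.arctan x) * Real.cos (Real.arctan x) := key
    _ ≤ Real.sin (Real.arctan x) * 1 := by nlinarith
    _ ≤ Real.arctan x := by linarith

private lemma my_arctan_ub {p s : ℝ} (hp : 0 < p) (hs : 0 < s) :
    Real.arctan (s/p) ≤ Real.pi/2 - p*s/(p^2+s^2) := by
  have hinv := Real.arctan_inv_of_pos (show 0 < s/p by positivity)
  have hie : (s/p)⁻¹ = p/s := by rw [inv_div]
  rw [hie] at hinv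
  have hlb : (p/s) / (1 + (p/s)^2) ≤ Real.arctan (p/s) := my_arctan_lb (by positivity)
  have hee : (p/s) / (1 + (p/s)^2) = p*s/(p^2+s^2) := by
    have h1 : p^2 + s^2 > 0 := by positivity
    field_simp
    ring
  rw [hee] at hlb
  linarith

private lemma aux_hQ (a : ℝ) (ha : 1 < a) (hc3 : a ≤ 3) :
    0 < (a+1) * (-5*a^2 + 26*a - 11)^2 - 88.83 * (a^2 * ((a-1) * (3-a)^2)) := by
  nlinarith [mul_nonneg (pow_nonneg (sub_nonneg.2 ha.le) 4) (sub_nonneg.2 hc3),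
    mul_nonneg (pow_nonneg (sub_nonneg.2 ha.le) 3) (sub_nonneg.2 hc3),
    mul_nonneg (pow_nonneg (sub_nonneg.2 ha.le) 2) (sub_nonneg.2 hc3),
    mul_nonneg (sub_nonneg.2 ha.le) (sub_nonneg.2 hc3)]

private lemma aux_hkey (a w : ℝ) (ha : 1 < a) (hc3 : a ≤ 3)
    (hw2 : w ^ 2 = a ^ 2 - 1) (hw0 : 0 < w) :
    3 * Real.pi * (a * (a - 1) * (3 - a)) < w * (-5 * a ^ 2 + 26 * a - 11) := by
  have hπ3 : 3 < Real.pi := Real.pi_gt_three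
  have hπu : Real.pi < 3.1416 := by
    have := Real.pi_lt_d6; linarith
  have hπsq : Real.pi ^ 2 < 9.8697 := by
    nlinarith [mul_pos (show (0:ℝ) < 3.1416 - Real.pi by linarith)
      (show (0:ℝ) < 3.1416 + Real.pi by linarith)]
  have hQ : 0 < (a+1) * (-5*a^2 + 26*a - 11)^2 - 88.83 * (a^2 * ((a-1) * (3-a)^2)) :=
    aux_hQ a ha hc3
  have hR : 0 < -5 * a ^ 2 + 26 * a - 11 := by
    nlinarith [mul_nonneg (sub_nonneg.2 ha.le) (sub_nonneg.2 hc3)]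
  have hX : 0 ≤ a * (a - 1) * (3 - a) := by
    apply mul_nonneg (mul_nonneg (by linarith) (by linarith)); linarith
  have hR0 : 0 ≤ w * (-5 * a ^ 2 + 26 * a - 11) := mul_nonneg hw0.le hR.le
  have hsq2 : (3 * Real.pi * (a * (a - 1) * (3 - a))) ^ 2
      < (w * (-5 * a ^ 2 + 26 * a - 11)) ^ 2 := by
    have e1 : (w * (-5 * a ^ 2 + 26 * a - 11)) ^ 2
        = (a ^ 2 - 1) * (-5 * a ^ 2 + 26 * a - 11) ^ 2 := by
      rw [mul_pow, hw2]
    rw [e1]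
    have e3 : (3 * Real.pi * (a * (a - 1) * (3 - a))) ^ 2
        ≤ 88.83 * (a * (a - 1) * (3 - a)) ^ 2 := by
      nlinarith [mul_le_mul_of_nonneg_right hπsq.le (sq_nonneg (a * (a - 1) * (3 - a))),
        sq_nonneg (a * (a - 1) * (3 - a))]
    have e4 : 88.83 * (a * (a - 1) * (3 - a)) ^ 2
        < (a ^ 2 - 1) * (-5 * a ^ 2 + 26 * a - 11) ^ 2 := by
      nlinarith [mul_pos (sub_pos.2 ha) hQ]
    linarith
  exact lt_of_pow_lt_pow_left₀ 2 hR0 hsq2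

/-- The case `s ≤ a - 1`, final numeric bound. -/
private lemma aux_case1 (a s : ℝ) (ha : 1 < a) (hA : a < 11) (hs : 0 < s)
    (hS : s ≤ a - 1) :
    2*s + (11-a)*(s/(a-1)) - 5*a*s/(a-1)^2 - Real.pi*(a+1) < 0 := by
  have hp : 0 < a - 1 := by linarith
  have hq : 0 < a + 1 := by linarith
  have hπ3 : 3 < Real.pi := Real.pi_gt_three
  have h2 : s * (a^2 + 3*a - 9) / (a-1)^2 < Real.pi * (a+1) := by
    rw [div_lt_iff₀ (by positivity)]
    rcases le_or_gt (a^2 + 3*a - 9) 0 with hn | hn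
    · nlinarith [mul_nonpos_of_nonneg_of_nonpos hs.le hn,
        mul_pos (mul_pos Real.pi_pos hq) (mul_pos hp hp)]
    · have hmm : s * (a^2 + 3*a - 9) ≤ (a-1) * (a^2 + 3*a - 9) :=
        mul_le_mul_of_nonneg_right hS hn.le
      nlinarith [mul_pos hq (mul_pos hp hp), mul_pos hp
        (show (0:ℝ) < 2*a^2 - 3*a + 6 by nlinarith [sq_nonneg (a-1)])]
  have he : 2*s + (11-a)*(s/(a-1)) - 5*a*s/(a-1)^2 = s*(a^2 + 3*a - 9)/(a-1)^2 := by
    field_simp; ring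
  linarith [he, h2]

set_option maxHeartbeats 1000000 in
/-- The case `s > a - 1`: the residual bound, with `X` standing for `(a+1)·arctan(s/(a+1))`. -/
private lemma aux_case2 (a h s X : ℝ) (ha : 1 < a) (hA : a < 11) (hs : 0 < s)
    (hs2 : s^2 = 2*h) (hsq : s^2 < a^2 - 1) (hS : a - 1 < s)
    (hX1 : X ≤ s) (hX2 : X ≤ (a+1)*(Real.pi/2)) :
    s - ((-a^2 + 22*a - 11)*s)/(a^2 - 2*a + 2*h + 1)
      + (11-a)*Real.pi/2 - Real.pi*(a+1) + X < 0 := by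
  have hp : 0 < a - 1 := by linarith
  have hq : 0 < a + 1 := by linarith
  have hD1 : 0 < a ^ 2 - 2 * a + 2 * h + 1 := by nlinarith [sq_nonneg (a-1)]
  have hπ3 : 3 < Real.pi := Real.pi_gt_three
  have hπu : Real.pi < 3.1416 := by
    have := Real.pi_lt_d6; linarith
  have hsa : s < a := by nlinarith
  have hCpos : 0 < -a ^ 2 + 22 * a - 11 := by nlinarith
  have hDb : a ^ 2 - 2 * a + 2 * h + 1 ≤ 2 * a ^ 2 - 2 * a := by nlinarith
  have h2a : (0:ℝ) < 2 * a ^ 2 - 2 * a := by nlinarith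
  rcases le_or_gt a 3 with hc3 | hc3
  · -- 1 < a ≤ 3
    set w : ℝ := Real.sqrt (a ^ 2 - 1) with hw
    have hw2 : w ^ 2 = a ^ 2 - 1 := Real.sq_sqrt (by nlinarith)
    have hw0 : 0 < w := Real.sqrt_pos.2 (by nlinarith)
    have hsw : s < w := by nlinarith
    have hwp : a - 1 < w := by nlinarith
    have hp2sw : (a-1) * (a-1) < s * w := mul_lt_mul' hS.le hwp (by linarith) hs
    have hT : ((-a ^ 2 + 22 * a - 11) * w) / (2 * a ^ 2 - 2 * a)
        ≤ ((-a ^ 2 + 22 * a - 11) * s) / (a ^ 2 - 2 * a + 2 * h + 1) := by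
      rw [div_le_div_iff₀ h2a hD1]
      have hw2s : s * w^2 = s * (a^2 - 1) := by rw [hw2]
      have hmono : w * (a ^ 2 - 2 * a + 2 * h + 1) ≤ s * (2 * a ^ 2 - 2 * a) := by
        nlinarith [mul_nonneg (sub_nonneg.2 hsw.le) (sub_nonneg.2 hp2sw.le), hw2s, hs2]
      linarith [mul_le_mul_of_nonneg_left hmono hCpos.le]
    have hkey := aux_hkey a w ha hc3 hw2 hw0
    have h2 : 2*w + (11-a)*Real.pi/2 - Real.pi*(a+1)
        < ((-a ^ 2 + 22 * a - 11) * w) / (2 * a ^ 2 - 2 * a) := by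
      rw [lt_div_iff₀ h2a]
      linarith [hkey]
    linarith [hT, hsw, h2, hX1]
  · rcases le_or_gt a 4 with hc4 | hc4
    · -- 3 < a ≤ 4
      have hT2 : 2*s < ((-a ^ 2 + 22 * a - 11) * s) / (a ^ 2 - 2 * a + 2 * h + 1) := by
        rw [lt_div_iff₀ hD1]
        have hgap : 0 < (-a^2 + 22*a - 11) - 2*(a^2 - 2*a + 2*h + 1) := by
          nlinarith [mul_nonneg (sub_nonneg.2 hc3.le) (sub_nonneg.2 hc4)]
        nlinarith [mul_pos hs hgap]
      have hπ9 : (11-a)*Real.pi/2 - Real.pi*(a+1) ≤ 0 := by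
        nlinarith [mul_nonneg (show (0:ℝ) ≤ 3*a - 9 by linarith) Real.pi_pos.le]
      linarith [hT2, hπ9, hX1]
    · -- a > 4
      have hT : ((-a ^ 2 + 22 * a - 11) * s) / (2 * a ^ 2 - 2 * a)
          ≤ ((-a ^ 2 + 22 * a - 11) * s) / (a ^ 2 - 2 * a + 2 * h + 1) := by
        rw [div_le_div_iff₀ h2a hD1]
        linarith [mul_nonneg (mul_nonneg hCpos.le hs.le) (sub_nonneg.2 hDb)]
      rcases le_or_gt a 5 with hc5 | hc5
      · -- 4 < a ≤ 5
        have hN : 3*a^2 - 24*a + 11 < 0 := by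
          nlinarith [mul_nonneg (sub_nonneg.2 hc4.le) (sub_nonneg.2 hc5)]
        have hsN : s*(3*a^2 - 24*a + 11) < (a-1)*(3*a^2 - 24*a + 11) :=
          mul_lt_mul_of_neg_right hS hN
        have hfin2 : s + (11-a)*Real.pi/2 + (a+1)*(Real.pi/2) - Real.pi*(a+1)
            < ((-a ^ 2 + 22 * a - 11) * s) / (2 * a ^ 2 - 2 * a) := by
          rw [lt_div_iff₀ h2a]
          have h5a : Real.pi*(5-a) ≤ 3.1416*(5-a) :=
            mul_le_mul_of_nonneg_right hπu.le (by linarith)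
          have h5a2 : Real.pi*(5-a)*(2*a^2 - 2*a) ≤ 3.1416*(5-a)*(2*a^2 - 2*a) :=
            mul_le_mul_of_nonneg_right h5a (by nlinarith)
          nlinarith [hsN, h5a2,
            mul_pos hp (show (0:ℝ) < 3.2832*a^2 - 7.416*a - 11 by nlinarith)]
        linarith [hT, hfin2, hX2]
      · -- 5 < a < 11
        have h5a : Real.pi*(5-a) ≤ 3*(5-a) := by
          nlinarith [mul_nonneg (sub_nonneg.2 hπ3.le) (show (0:ℝ) ≤ a - 5 by linarith)]
        have hfin3 : s + 15 - 3*a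
            < ((-a ^ 2 + 22 * a - 11) * s) / (2 * a ^ 2 - 2 * a) := by
          rw [lt_div_iff₀ h2a]
          rcases lt_or_ge (3*a^2 - 24*a + 11) 0 with hN | hN
          · have hsN : s*(3*a^2 - 24*a + 11) < (a-1)*(3*a^2 - 24*a + 11) :=
              mul_lt_mul_of_neg_right hS hN
            nlinarith [hsN, mul_pos hp (show (0:ℝ) < 3*a^2 - 6*a - 11 by nlinarith)]
          · have hsN : s*(3*a^2 - 24*a + 11) ≤ a*(3*a^2 - 24*a + 11) :=
              mul_le_mul_of_nonneg_right hsa.le hN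
            nlinarith [hsN, mul_pos (show (0:ℝ) < a by linarith)
              (show (0:ℝ) < 3*a^2 - 12*a + 19 by nlinarith [sq_nonneg (a-2)])]
        have hpi5 : (11-a)*Real.pi/2 + (a+1)*(Real.pi/2) - Real.pi*(a+1)
            = Real.pi*(5-a) := by ring
        linarith [hT, hfin3, h5a, hpi5, hX2]

set_option maxHeartbeats 1000000 in
private lemma main_ineq (a h s : ℝ) (ha : 1 < a) (hs : 0 < s) (hs2 : s^2 = 2*h)
    (hsq : s^2 < a^2 - 1) :
    s * (a ^ 2 - 22 * a + 4 * h + 1) / (2 * (a ^ 2 - 2 * a + 2 * h + 1))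
      - s * (a ^ 2 + 2 * a + 4 * h + 1) / (2 * (a ^ 2 + 2 * a + 2 * h + 1))
      - Real.pi * (a + 1)
      + (11 - a) * Real.arctan (s / (a - 1))
      + (a + 1) * Real.arctan (s / (a + 1)) < 0 := by
  have hp : 0 < a - 1 := by linarith
  have hq : 0 < a + 1 := by linarith
  have hD1 : 0 < a ^ 2 - 2 * a + 2 * h + 1 := by nlinarith [sq_nonneg (a-1)]
  have hD2 : 0 < a ^ 2 + 2 * a + 2 * h + 1 := by nlinarith [sq_nonneg (a+1)]
  have hπ3 : 3 < Real.pi := Real.pi_gt_three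
  have hF2 : 0 < s * (a ^ 2 + 2 * a + 4 * h + 1) / (2 * (a ^ 2 + 2 * a + 2 * h + 1)) := by
    apply div_pos
    · apply mul_pos hs; nlinarith [sq_nonneg (a+1)]
    · linarith
  have hF1 : s * (a ^ 2 - 22 * a + 4 * h + 1) / (2 * (a ^ 2 - 2 * a + 2 * h + 1))
      ≤ s - 10 * a * s / (a ^ 2 - 2 * a + 2 * h + 1) := by
    have he : s - 10 * a * s / (a ^ 2 - 2 * a + 2 * h + 1)
        - s * (a ^ 2 - 22 * a + 4 * h + 1) / (2 * (a ^ 2 - 2 * a + 2 * h + 1))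
        = s * (a - 1) ^ 2 / (2 * (a ^ 2 - 2 * a + 2 * h + 1)) := by
      have hne := hD1.ne'
      rw [div_eq_mul_inv, div_eq_mul_inv, div_eq_mul_inv, mul_inv]
      linear_combination (-s) * (mul_inv_cancel₀ hne)
    have hge : 0 ≤ s * (a - 1) ^ 2 / (2 * (a ^ 2 - 2 * a + 2 * h + 1)) := by positivity
    linarith
  have hAt1nn : 0 ≤ Real.arctan (s / (a - 1)) := my_arctan_nonneg (by positivity)
  have hAt2s : (a + 1) * Real.arctan (s / (a + 1)) ≤ s := by
    calc (a + 1) * Real.arctan (s / (a + 1)) ≤ (a + 1) * (s / (a + 1)) :=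
          mul_le_mul_of_nonneg_left (my_arctan_le_self (by positivity)) hq.le
      _ = s := by field_simp
  have hAt2half : (a + 1) * Real.arctan (s / (a + 1)) ≤ (a + 1) * (Real.pi / 2) :=
    mul_le_mul_of_nonneg_left (Real.arctan_lt_pi_div_two _).le hq.le
  rcases le_or_gt 11 a with hA | hA
  · -- Case a ≥ 11
    have hA1 : (11 - a) * Real.arctan (s / (a - 1)) ≤ 0 :=
      mul_nonpos_of_nonpos_of_nonneg (by linarith) hAt1nn
    have hsq' : s < a + 1 := by nlinarith
    have hF1' : s * (a ^ 2 - 22 * a + 4 * h + 1) / (2 * (a ^ 2 - 2 * a + 2 * h + 1)) ≤ s := by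
      rw [div_le_iff₀ (by linarith)]
      nlinarith [mul_pos hs (show (0:ℝ) < a^2 + 18*a + 1 by nlinarith)]
    linarith [mul_lt_mul_of_pos_right hπ3 hq, hF1', hF2, hA1, hAt2half, hsq']
  · -- a < 11
    have h11 : (0:ℝ) ≤ 11 - a := by linarith
    rcases le_or_gt s (a - 1) with hS | hS
    · -- Subcase s ≤ a-1
      have hA1 : (11 - a) * Real.arctan (s / (a - 1)) ≤ (11 - a) * (s / (a - 1)) :=
        mul_le_mul_of_nonneg_left (my_arctan_le_self (by positivity)) h11
      have hb1 : 5 * a * s / (a - 1) ^ 2 ≤ 10 * a * s / (a ^ 2 - 2 * a + 2 * h + 1) := by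
        rw [div_le_div_iff₀ (by positivity) hD1]
        nlinarith [mul_nonneg (mul_nonneg (show (0:ℝ) ≤ a by linarith) hs.le)
            (sub_nonneg.2 (show s^2 ≤ (a-1)^2 by nlinarith)),
          mul_pos (mul_pos (show (0:ℝ) < a by linarith) hs) (mul_pos hp hp)]
      have hfin := aux_case1 a s ha hA hs hS
      linarith [hF1, hb1, hA1, hAt2s, hF2, hfin]
    · -- Subcase s > a-1
      have hAt1ub : Real.arctan (s / (a - 1))
          ≤ Real.pi / 2 - (a - 1) * s / (a ^ 2 - 2 * a + 2 * h + 1) := by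
        have hub := my_arctan_ub hp hs
        have he : (a-1)^2 + s^2 = a ^ 2 - 2 * a + 2 * h + 1 := by nlinarith
        rw [he] at hub
        exact hub
      have hA1 : (11 - a) * Real.arctan (s / (a - 1))
          ≤ (11 - a) * Real.pi / 2
            - ((11 - a) * (a - 1) * s) / (a ^ 2 - 2 * a + 2 * h + 1) := by
        calc (11 - a) * Real.arctan (s / (a - 1))
            ≤ (11 - a) * (Real.pi / 2 - (a - 1) * s / (a ^ 2 - 2 * a + 2 * h + 1)) :=
              mul_le_mul_of_nonneg_left hAt1ub h11
          _ = (11 - a) * Real.pi / 2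
              - ((11 - a) * (a - 1) * s) / (a ^ 2 - 2 * a + 2 * h + 1) := by ring
      have hsum : 10 * a * s / (a ^ 2 - 2 * a + 2 * h + 1)
          + ((11 - a) * (a - 1) * s) / (a ^ 2 - 2 * a + 2 * h + 1)
          = ((-a ^ 2 + 22 * a - 11) * s) / (a ^ 2 - 2 * a + 2 * h + 1) := by
        rw [← add_div]; ring_nf
      have hc2 := aux_case2 a h s ((a + 1) * Real.arctan (s / (a + 1)))
        ha hA hs hs2 hsq hS hAt2s hAt2half
      linarith [hF1, hA1, hsum, hF2, hc2]

theorem melnikov_partial_a_along_curve_neg (a h : ℝ) (ha : 1 < a)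
    (hh : 0 < h) (hh2 : h < (a ^ 2 - 1) / 2) :
    Real.sqrt h * (a ^ 2 - 22 * a + 4 * h + 1)
        / (Real.sqrt 2 * (a ^ 2 - 2 * a + 2 * h + 1))
      - Real.sqrt h * (a ^ 2 + 2 * a + 4 * h + 1)
        / (Real.sqrt 2 * (a ^ 2 + 2 * a + 2 * h + 1))
      - Real.pi * (a + 1)
      + (11 - a) * Real.arctan (Real.sqrt (2 * h) / (a - 1))
      + (a + 1) * Real.arctan (Real.sqrt (2 * h) / (a + 1)) < 0 := by
  have h2h : (0:ℝ) < 2 * h := by linarith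
  have hs : 0 < Real.sqrt (2 * h) := Real.sqrt_pos.2 h2h
  have hs2 : (Real.sqrt (2 * h)) ^ 2 = 2 * h := Real.sq_sqrt h2h.le
  have hsq : (Real.sqrt (2 * h)) ^ 2 < a ^ 2 - 1 := by rw [hs2]; linarith
  have e1 : ∀ X D : ℝ, 0 < D →
      Real.sqrt h * X / (Real.sqrt 2 * D) = Real.sqrt (2 * h) * X / (2 * D) := by
    intro X D hD
    have hs2'' : (Real.sqrt 2) ^ 2 = 2 := Real.sq_sqrt (by norm_num)
    rw [Real.sqrt_mul (by norm_num) h, div_eq_div_iff (by positivity) (by positivity)]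
    linear_combination (-(Real.sqrt h * X * D)) * hs2''
  have hD1 : 0 < a ^ 2 - 2 * a + 2 * h + 1 := by nlinarith [sq_nonneg (a-1)]
  have hD2 : 0 < a ^ 2 + 2 * a + 2 * h + 1 := by nlinarith [sq_nonneg (a+1)]
  rw [e1 _ _ hD1, e1 _ _ hD2]
  exact main_ineq a h (Real.sqrt (2 * h)) ha hs hs2 hsq
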